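/- For every integer n ≥ 4, every permutation of n objects is a product of at most 4 derangements (permutations without fixed points). In particular, the symmetric group Sym(n) is generated by derangements. -/

import Mathlib

lemma exists_good_derangement (n : ℕ) (hn : 4 ≤ n) (σ : Equiv.Perm (Fin n)) :
    ∃ d : Equiv.Perm (Fin n), ∀ x, d x ≠ x ∧ d x ≠ σ x := by
  set t : Fin n → Finset (Fin n) := fun x => ({x, σ x} : Finset (Fin n))ᶜ with ht
  have hall : ∀ s : Finset (Fin n), s.card ≤ (s.biUnion t).card := by
    intro s
    by_cases hcase : s.card ≤ n - 2
    · rcases s.eq_empty_or_nonempty with rfl | ⟨x, hx⟩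
      · simp
      · have h1 : t x ⊆ s.biUnion t := Finset.subset_biUnion_of_mem t hx
        have h2 : (t x).card = n - ({x, σ x} : Finset (Fin n)).card := by
          rw [ht]; simp only [Finset.card_compl, Fintype.card_fin]
        have h3 : ({x, σ x} : Finset (Fin n)).card ≤ 2 :=
          le_trans (Finset.card_insert_le _ _) (by simp)
        have := Finset.card_le_card h1
        omega
    · have hsub : s.biUnion t = Finset.univ := by
        apply Finset.eq_univ_of_forall
        intro c
        have hcard : 1 ≤ (s \ ({c, σ⁻¹ c} : Finset (Fin n))).card := by
          have h3 : ({c, σ⁻¹ c} : Finset (Fin n)).card ≤ 2 :=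
            le_trans (Finset.card_insert_le _ _) (by simp)
          have := Finset.le_card_sdiff ({c, σ⁻¹ c} : Finset (Fin n)) s
          have hsn : s.card ≤ n := le_trans (Finset.card_le_univ s) (by simp)
          omega
        obtain ⟨x, hx⟩ := Finset.card_pos.mp hcard
        rw [Finset.mem_sdiff] at hx
        obtain ⟨hxs, hxne⟩ := hx
        simp only [Finset.mem_insert, Finset.mem_singleton, not_or] at hxne
        refine Finset.mem_biUnion.mpr ⟨x, hxs, ?_⟩
        rw [ht]
        simp only [Finset.mem_compl, Finset.mem_insert, Finset.mem_singleton, not_or]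
        refine ⟨fun h => hxne.1 h.symm, fun h => hxne.2 ?_⟩
        rw [h]; simp
      rw [hsub]
      simpa using Finset.card_le_univ s
  obtain ⟨f, hfinj, hf⟩ := (Finset.all_card_le_biUnion_card_iff_exists_injective t).mp hall
  refine ⟨Equiv.ofBijective f (Finite.injective_iff_bijective.mp hfinj), fun x => ?_⟩
  have := hf x
  rw [ht] at this
  simp only [Finset.mem_compl, Finset.mem_insert, Finset.mem_singleton, not_or] at this
  exact ⟨this.1, this.2⟩

theorem derangements_generate (n : ℕ) (hn : 4 ≤ n) :
    (∀ σ : Equiv.Perm (Fin n), ∃ l : List (Equiv.Perm (Fin n)),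
      l.length ≤ 4 ∧ (∀ τ ∈ l, ∀ x, τ x ≠ x) ∧ l.prod = σ) ∧
    Subgroup.closure {σ : Equiv.Perm (Fin n) | ∀ x, σ x ≠ x} = ⊤ := by
  have main : ∀ σ : Equiv.Perm (Fin n), ∃ l : List (Equiv.Perm (Fin n)),
      l.length ≤ 4 ∧ (∀ τ ∈ l, ∀ x, τ x ≠ x) ∧ l.prod = σ := by
    intro σ
    obtain ⟨d, hd⟩ := exists_good_derangement n hn σ
    refine ⟨[σ * d⁻¹, d], by simp, ?_, by simp⟩
    intro τ hτ x
    simp only [List.mem_cons, List.not_mem_nil, or_false] at hτ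
    rcases hτ with rfl | rfl
    · intro h
      have : σ (d⁻¹ x) = x := h
      have h2 := (hd (d⁻¹ x)).2
      rw [← Equiv.Perm.mul_apply, mul_inv_cancel, Equiv.Perm.one_apply] at h2
      exact h2 this.symm
    · exact (hd x).1
  refine ⟨main, ?_⟩
  rw [eq_top_iff]
  intro σ _
  obtain ⟨l, _, hder, hprod⟩ := main σ
  rw [← hprod]
  exact Subgroup.list_prod_mem _ fun τ hτ => Subgroup.subset_closure (hder τ hτ)
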